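/- Every nested family 𝕄 of irreducible subsets of Δ is the set of irreducible components of the elements of a flag of complete sets: there exists a chain A₁ ⊇ A₂ ⊇ ⋯ ⊇ A_k of complete subsets of Δ such that 𝕄 is exactly the set of all irreducible components of the sets A₁, …, A_k. -/

import Mathlib

/-- `S` is a complete subset relative to the arrangement `Δ`:
`S` equals the intersection of `Δ` with the span of `S`. -/
def IsCompleteSet {V : Type*} [AddCommGroup V] [Module ℝ V] (Δ S : Set V) : Prop :=
  Δ ∩ (Submodule.span ℝ S : Set V) = S

/-- `(S₁, S₂)` is a decomposition of the set `S`: a partition into two nonempty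
parts whose spans form a direct sum decomposition of the span of `S`. -/
def IsDecomposition {V : Type*} [AddCommGroup V] [Module ℝ V] (S S₁ S₂ : Set V) : Prop :=
  S₁.Nonempty ∧ S₂.Nonempty ∧ Disjoint S₁ S₂ ∧ S₁ ∪ S₂ = S ∧
    Submodule.span ℝ S₁ ⊓ Submodule.span ℝ S₂ = ⊥ ∧
    Submodule.span ℝ S₁ ⊔ Submodule.span ℝ S₂ = Submodule.span ℝ S

/-- A nonempty complete set is irreducible if it admits no decomposition. -/
def IsIrred {V : Type*} [AddCommGroup V] [Module ℝ V] (Δ S : Set V) : Prop :=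
  IsCompleteSet Δ S ∧ S.Nonempty ∧ ∀ S₁ S₂ : Set V, ¬ IsDecomposition S S₁ S₂

/-- `𝒞` is the set of irreducible components of `S`: a finite family of pairwise
disjoint irreducible sets whose (disjoint) union is `S` and whose spans form a
direct sum decomposition of the span of `S`. -/
def IsIrredComponents {V : Type*} [AddCommGroup V] [Module ℝ V]
    (Δ S : Set V) (𝒞 : Set (Set V)) : Prop :=
  𝒞.Finite ∧ (∀ T ∈ 𝒞, IsIrred Δ T) ∧ 𝒞.PairwiseDisjoint id ∧ ⋃₀ 𝒞 = S ∧
    iSupIndep (fun T : 𝒞 => Submodule.span ℝ (T : Set V)) ∧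
    (⨆ T ∈ 𝒞, Submodule.span ℝ T) = Submodule.span ℝ S


/-- A family `𝕄` of irreducible subsets of `Δ` is nested if for every nonempty
subfamily in which no member is contained in another, the union of the subfamily
is complete and its members are the irreducible components of the union. -/
def IsNestedFam {V : Type*} [AddCommGroup V] [Module ℝ V] (Δ : Set V) (𝕄 : Set (Set V)) : Prop :=
  (∀ T ∈ 𝕄, IsIrred Δ T) ∧
    ∀ 𝒯 ⊆ 𝕄, 𝒯.Nonempty → (∀ T₁ ∈ 𝒯, ∀ T₂ ∈ 𝒯, T₁ ⊆ T₂ → T₁ = T₂) →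
      IsCompleteSet Δ (⋃₀ 𝒯) ∧ IsIrredComponents Δ (⋃₀ 𝒯) 𝒯


/-- every nested family `𝕄` of irreducible subsets of `Δ` is the set
of irreducible components of the members of a flag `A₁ ⊇ A₂ ⊇ ⋯ ⊇ A_k` of
(nonempty) complete subsets of `Δ`. -/
theorem stmt_3 {V : Type*} [AddCommGroup V] [Module ℝ V] [FiniteDimensional ℝ V]
    (Δ : Set V) (hΔfin : Δ.Finite) (hΔspan : Submodule.span ℝ Δ = ⊤)
    (hΔ0 : ∀ v ∈ Δ, v ≠ 0)
    (hΔpair : ∀ v ∈ Δ, ∀ w ∈ Δ, v ≠ w → ∀ c : ℝ, w ≠ c • v)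
    (𝕄 : Set (Set V)) (h𝕄 : IsNestedFam Δ 𝕄) :
    ∃ (k : ℕ) (A : Fin k → Set V) (𝒞 : Fin k → Set (Set V)),
      (∀ i, IsCompleteSet Δ (A i)) ∧ (∀ i, (A i).Nonempty) ∧
      (∀ i j : Fin k, i ≤ j → A j ⊆ A i) ∧
      (∀ i, IsIrredComponents Δ (A i) (𝒞 i)) ∧
      𝕄 = ⋃ i, 𝒞 i := by
  classical
  have h𝕄irr := h𝕄.1
  have h𝕄sub : ∀ T ∈ 𝕄, T ⊆ Δ := by
    intro T hT
    have h := (h𝕄irr T hT).1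
    rw [IsCompleteSet] at h
    rw [← h]; exact Set.inter_subset_left
  have h𝕄fin : 𝕄.Finite := hΔfin.finite_subsets.subset (fun T hT => h𝕄sub T hT)
  -- any two members of 𝕄 with nonempty intersection are comparable
  have hcomp : ∀ T₁ ∈ 𝕄, ∀ T₂ ∈ 𝕄, (T₁ ∩ T₂).Nonempty → T₁ ⊆ T₂ ∨ T₂ ⊆ T₁ := by
    intro T₁ h1 T₂ h2 hne
    by_contra h
    push_neg at h
    obtain ⟨h12, h21⟩ := h
    have hneq : T₁ ≠ T₂ := fun e => h12 (e ▸ subset_rfl)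
    have hanti : ∀ a ∈ ({T₁, T₂} : Set (Set V)), ∀ b ∈ ({T₁, T₂} : Set (Set V)),
        a ⊆ b → a = b := by
      intro a ha b hb hab
      rcases ha with rfl | ha <;> rcases hb with rfl | hb
      · rfl
      · rw [Set.mem_singleton_iff] at hb; subst hb; exact absurd hab h12
      · rw [Set.mem_singleton_iff] at ha; subst ha; exact absurd hab h21
      · rw [Set.mem_singleton_iff] at ha hb; rw [ha, hb]
    have hsubfam : ({T₁, T₂} : Set (Set V)) ⊆ 𝕄 := by
      intro x hx
      rcases hx with rfl | hx
      · exact h1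
      · rw [Set.mem_singleton_iff] at hx; subst hx; exact h2
    have hic := (h𝕄.2 {T₁, T₂} hsubfam ⟨T₁, Set.mem_insert _ _⟩ hanti).2
    have hdisj : Disjoint T₁ T₂ :=
      hic.2.2.1 (Set.mem_insert _ _) (Set.mem_insert_of_mem _ rfl) hneq
    exact (Set.not_disjoint_iff_nonempty_inter.2 hne) hdisj
  -- the "depth" function
  set c : Set V → ℕ := fun T => {S | S ∈ 𝕄 ∧ T ⊂ S}.ncard with hc
  have hUfin : ∀ T : Set V, {S | S ∈ 𝕄 ∧ T ⊂ S}.Finite :=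
    fun T => h𝕄fin.subset (fun S hS => hS.1)
  -- the chain step lemma
  have hstep : ∀ T ∈ 𝕄, ∀ i : ℕ, c T = i + 1 → ∃ S ∈ 𝕄, T ⊂ S ∧ c S = i := by
    intro T hT i hcT
    set U := {S | S ∈ 𝕄 ∧ T ⊂ S} with hU
    have hUcard : U.ncard = i + 1 := hcT
    have hUne : U.Nonempty := Set.nonempty_of_ncard_ne_zero (by omega)
    obtain ⟨S₁, hS₁U, hmin'⟩ := Set.Finite.exists_minimalFor id U (hUfin T) hUne
    have hmin : ∀ S ∈ U, S ⊆ S₁ → S₁ = S := fun S hS h => (hmin' hS h).antisymm h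
    have hTne : T.Nonempty := (h𝕄irr T hT).2.1
    have hUeq : {S | S ∈ 𝕄 ∧ S₁ ⊂ S} = U \ {S₁} := by
      ext S
      constructor
      · rintro ⟨hS𝕄, hS₁S⟩
        exact ⟨⟨hS𝕄, hS₁U.2.trans hS₁S⟩, fun e => hS₁S.ne (by rw [← e])⟩
      · rintro ⟨⟨hS𝕄, hTS⟩, hne⟩
        rw [Set.mem_singleton_iff] at hne
        refine ⟨hS𝕄, ?_⟩
        have hint : (S₁ ∩ S).Nonempty := ⟨hTne.choose, hS₁U.2.1 hTne.choose_spec,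
          hTS.1 hTne.choose_spec⟩
        rcases hcomp S₁ hS₁U.1 S hS𝕄 hint with h | h
        · exact h.ssubset_of_ne (fun e => hne e.symm)
        · exact absurd (hmin S ⟨hS𝕄, hTS⟩ h) (fun e => hne e.symm)
    refine ⟨S₁, hS₁U.1, hS₁U.2, ?_⟩
    have : c S₁ = (U \ {S₁}).ncard := by rw [hc]; simp only [hUeq]
    rw [this, Set.ncard_diff_singleton_of_mem hS₁U]
    omega
  rcases 𝕄.eq_empty_or_nonempty with rfl | h𝕄ne
  · refine ⟨0, Fin.elim0, Fin.elim0, fun i => i.elim0, fun i => i.elim0,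
      fun i => i.elim0, fun i => i.elim0, ?_⟩
    simp
  -- maximal depth
  obtain ⟨T₀, hT₀, hmax'⟩ := Set.Finite.exists_maximalFor c 𝕄 h𝕄fin h𝕄ne
  have hmax : ∀ T ∈ 𝕄, c T₀ ≤ c T → c T₀ = c T := fun T hT h => le_antisymm h (hmax' hT h)
  set m := c T₀ with hm
  have hbound : ∀ T ∈ 𝕄, c T ≤ m := by
    intro T hT
    by_contra h
    push_neg at h
    exact absurd (hmax T hT h.le) (by omega)
  -- every depth up to m is attained
  have hattain : ∀ j : ℕ, ∃ T ∈ 𝕄, c T = m - j := by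
    intro j
    induction j with
    | zero => exact ⟨T₀, hT₀, by omega⟩
    | succ j ih =>
      obtain ⟨T, hT, hcT⟩ := ih
      rcases Nat.eq_zero_or_pos (m - j) with h0 | hpos
      · exact ⟨T, hT, by omega⟩
      · obtain ⟨S, hS, _, hcS⟩ := hstep T hT (m - (j + 1)) (by omega)
        exact ⟨S, hS, hcS⟩
  have hlayer : ∀ i : ℕ, i ≤ m → ∃ T ∈ 𝕄, c T = i := by
    intro i hi
    obtain ⟨T, hT, hcT⟩ := hattain (m - i)
    exact ⟨T, hT, by omega⟩
  -- the layers and their unions, as functions on ℕ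
  set Cn : ℕ → Set (Set V) := fun n => {T | T ∈ 𝕄 ∧ c T = n} with hCn
  set An : ℕ → Set V := fun n => ⋃₀ Cn n with hAn
  have hCsub : ∀ n, Cn n ⊆ 𝕄 := fun n T hT => hT.1
  have hCanti : ∀ n, ∀ T₁ ∈ Cn n, ∀ T₂ ∈ Cn n, T₁ ⊆ T₂ → T₁ = T₂ := by
    intro n T₁ h1 T₂ h2 hsub
    by_contra hne
    have hss : T₁ ⊂ T₂ := hsub.ssubset_of_ne hne
    have hUss : {S | S ∈ 𝕄 ∧ T₂ ⊂ S} ⊂ {S | S ∈ 𝕄 ∧ T₁ ⊂ S} := by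
      constructor
      · rintro S ⟨hS, h⟩; exact ⟨hS, hss.trans h⟩
      · intro hcon
        have : T₂ ∈ {S | S ∈ 𝕄 ∧ T₂ ⊂ S} := hcon ⟨h2.1, hss⟩
        exact this.2.ne rfl
    have : c T₂ < c T₁ := Set.ncard_lt_ncard hUss (hUfin T₁)
    have e1 := h1.2
    have e2 := h2.2
    omega
  have hCne : ∀ n ≤ m, (Cn n).Nonempty := by
    intro n hn
    obtain ⟨T, hT, hcT⟩ := hlayer n hn
    exact ⟨T, hT, hcT⟩
  have hnest : ∀ n ≤ m, IsCompleteSet Δ (An n) ∧ IsIrredComponents Δ (An n) (Cn n) :=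
    fun n hn => h𝕄.2 (Cn n) (hCsub n) (hCne n hn) (hCanti n)
  -- monotonicity
  have hAstep : ∀ n : ℕ, An (n + 1) ⊆ An n := by
    intro n x hx
    obtain ⟨T, ⟨hT𝕄, hcT⟩, hxT⟩ := hx
    obtain ⟨S, hS, hTS, hcS⟩ := hstep T hT𝕄 n hcT
    exact ⟨S, ⟨hS, hcS⟩, hTS.1 hxT⟩
  have hAmono : ∀ d n : ℕ, An (n + d) ⊆ An n := by
    intro d
    induction d with
    | zero => intro n; exact subset_rfl
    | succ d ih =>
      intro n
      have : n + (d + 1) = (n + d) + 1 := by omega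
      rw [this]
      exact (hAstep (n + d)).trans (ih n)
  refine ⟨m + 1, fun i => An i.val, fun i => Cn i.val, ?_, ?_, ?_, ?_, ?_⟩
  · exact fun i => (hnest i.val (by omega)).1
  · intro i
    obtain ⟨T, hT⟩ := hCne i.val (by omega)
    obtain ⟨x, hx⟩ := (h𝕄irr T hT.1).2.1
    exact ⟨x, T, hT, hx⟩
  · intro i j hij
    have hj : (j : ℕ) = i + (j - i) := by omega
    show An j.val ⊆ An i.val
    rw [hj]
    exact hAmono _ _
  · exact fun i => (hnest i.val (by omega)).2
  · ext T
    simp only [Set.mem_iUnion]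
    constructor
    · intro hT
      exact ⟨⟨c T, by have := hbound T hT; omega⟩, hT, rfl⟩
    · rintro ⟨i, hT, _⟩
      exact hT
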